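/- Let a, b be coprime positive integers with a ≤ b, and a', b' coprime positive integers with a' ≤ b', such that a*b = a'*b'. Let m be an integer with m ≡ -1 (mod 2a) and m ≡ 1 (mod 2b), and let m' be an integer with m' ≡ -1 (mod 2a') and m' ≡ 1 (mod 2b'). If m ≡ m' (mod 2ab) or m ≡ -m' (mod 2ab), then a = a' and b = b'. -/

import Mathlib

lemma gcd_key (a b : ℕ) (hab : Nat.Coprime a b) (u : ℤ)
    (hau : (a:ℤ) ∣ u) (hbu : (b:ℤ) ∣ u - 1) :
    Int.gcd ((a:ℤ) * b) u = a := by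
  have hd : (a:ℤ) ∣ (Int.gcd ((a:ℤ) * b) u : ℤ) :=
    Int.dvd_coe_gcd (Dvd.intro _ rfl) hau
  have h1 : (Int.gcd ((a:ℤ) * b) u : ℤ) ∣ (a:ℤ) * b := (Int.gcd_dvd_left _ _)
  have h2 : (Int.gcd ((a:ℤ) * b) u : ℤ) ∣ u := (Int.gcd_dvd_right _ _)
  have hcop : IsCoprime ((Int.gcd ((a:ℤ) * b) u : ℕ) : ℤ) (b:ℤ) := by
    rw [Int.isCoprime_iff_gcd_eq_one]
    have hone : (Int.gcd ((Int.gcd ((a:ℤ) * b) u : ℕ) : ℤ) (b:ℤ) : ℤ) ∣ 1 := by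
      have e1 : (Int.gcd ((Int.gcd ((a:ℤ) * b) u : ℕ) : ℤ) (b:ℤ) : ℤ) ∣ u :=
        ((Int.gcd_dvd_left _ _)).trans h2
      have e2 : (Int.gcd ((Int.gcd ((a:ℤ) * b) u : ℕ) : ℤ) (b:ℤ) : ℤ) ∣ u - 1 :=
        ((Int.gcd_dvd_right _ _)).trans hbu
      simpa using dvd_sub e1 e2
    exact_mod_cast Int.eq_one_of_dvd_one (by positivity) hone
  have hda : (Int.gcd ((a:ℤ) * b) u : ℤ) ∣ (a:ℤ) := hcop.dvd_of_dvd_mul_right h1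
  have heq : (Int.gcd ((a:ℤ) * b) u : ℤ) = (a:ℤ) :=
    Int.dvd_antisymm (by positivity) (by positivity) hda hd
  exact_mod_cast heq

lemma gcd_shift (n x k : ℤ) : Int.gcd n (x + n * k) = Int.gcd n x := by
  apply Nat.dvd_antisymm
  · rw [Int.natCast_dvd_natCast.symm]
    refine Int.dvd_coe_gcd (Int.gcd_dvd_left _ _) ?_
    have h1 : (Int.gcd n (x + n*k) : ℤ) ∣ n := (Int.gcd_dvd_left _ _)
    have h2 : (Int.gcd n (x + n*k) : ℤ) ∣ x + n * k := (Int.gcd_dvd_right _ _)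
    have h3 : (Int.gcd n (x + n*k) : ℤ) ∣ (x + n*k) - n*k := dvd_sub h2 (h1.mul_right k)
    simpa using h3
  · rw [Int.natCast_dvd_natCast.symm]
    exact Int.dvd_coe_gcd (Int.gcd_dvd_left _ _)
      (dvd_add (Int.gcd_dvd_right _ _) (((Int.gcd_dvd_left _ _)).mul_right k))

theorem mukai_element_recovers_pair (a b a' b' : ℕ)
    (ha : 0 < a) (hb : 0 < b) (hab : Nat.Coprime a b) (hle : a ≤ b)
    (ha' : 0 < a') (hb' : 0 < b') (hab' : Nat.Coprime a' b') (hle' : a' ≤ b')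
    (hprod : a * b = a' * b') (m m' : ℤ)
    (hm1 : m ≡ -1 [ZMOD (2 * a)]) (hm2 : m ≡ 1 [ZMOD (2 * b)])
    (hm'1 : m' ≡ -1 [ZMOD (2 * a')]) (hm'2 : m' ≡ 1 [ZMOD (2 * b')])
    (hmm : m ≡ m' [ZMOD (2 * a * b)] ∨ m ≡ -m' [ZMOD (2 * a * b)]) :
    a = a' ∧ b = b' := by
  have d1 : (2 * (a:ℤ)) ∣ m + 1 := by
    have h := hm1.dvd
    have := dvd_neg.2 h
    simpa [neg_sub, sub_neg_eq_add] using this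
  have d2 : (2 * (b:ℤ)) ∣ m - 1 := by simpa using hm2.symm.dvd
  have d1' : (2 * (a':ℤ)) ∣ m' + 1 := by
    have h := hm'1.dvd
    have := dvd_neg.2 h
    simpa [neg_sub, sub_neg_eq_add] using this
  have d2' : (2 * (b':ℤ)) ∣ m' - 1 := by simpa using hm'2.symm.dvd
  -- m = 2u - 1
  obtain ⟨u, hu⟩ : (2:ℤ) ∣ m + 1 := (dvd_mul_right 2 (a:ℤ)).trans d1
  obtain ⟨u', hu'⟩ : (2:ℤ) ∣ m' + 1 := (dvd_mul_right 2 (a':ℤ)).trans d1'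
  have hA : (a:ℤ) ∣ u := by
    obtain ⟨k, hk⟩ := d1
    refine ⟨k, mul_left_cancel₀ (two_ne_zero) ?_⟩
    rw [hu] at hk; linarith [hk]
  have hB : (b:ℤ) ∣ u - 1 := by
    obtain ⟨k, hk⟩ := d2
    refine ⟨k, mul_left_cancel₀ (two_ne_zero) ?_⟩
    have : m = 2*u - 1 := by omega
    rw [this] at hk; linarith [hk]
  have hA' : (a':ℤ) ∣ u' := by
    obtain ⟨k, hk⟩ := d1'
    refine ⟨k, mul_left_cancel₀ (two_ne_zero) ?_⟩
    rw [hu'] at hk; linarith [hk]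
  have hB' : (b':ℤ) ∣ u' - 1 := by
    obtain ⟨k, hk⟩ := d2'
    refine ⟨k, mul_left_cancel₀ (two_ne_zero) ?_⟩
    have : m' = 2*u' - 1 := by omega
    rw [this] at hk; linarith [hk]
  have key : Int.gcd ((a:ℤ) * b) u = a := gcd_key a b hab u hA hB
  have key' : Int.gcd ((a':ℤ) * b') u' = a' := gcd_key a' b' hab' u' hA' hB'
  have keyb' : Int.gcd ((b':ℤ) * a') (1 - u') = b' := by
    apply gcd_key b' a' hab'.symm
    · simpa [neg_sub] using (dvd_neg.2 hB')
    · have : (1 : ℤ) - u' - 1 = -u' := by ring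
      rw [this]
      exact dvd_neg.2 hA'
  have hprodZ : ((a:ℤ) * b) = ((a':ℤ) * b') := by exact_mod_cast hprod
  rcases hmm with h | h
  · -- m ≡ m'
    obtain ⟨k, hk⟩ := h.dvd  -- 2ab | m' - m
    have : u' = u + (a:ℤ)*b*k := by
      have hm : m = 2*u - 1 := by omega
      have hm' : m' = 2*u' - 1 := by omega
      rw [hm, hm'] at hk
      ring_nf at hk ⊢
      linarith [hk]
    have e : Int.gcd ((a:ℤ)*b) u' = Int.gcd ((a:ℤ)*b) u := by
      rw [this]; exact gcd_shift _ _ _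
    have : a = a' := by
      rw [← key, ← e, hprodZ, key']
    refine ⟨this, ?_⟩
    subst this
    exact Nat.eq_of_mul_eq_mul_left ha hprod
  · -- m ≡ -m'
    obtain ⟨k, hk⟩ := h.dvd  -- 2ab | -m' - m
    have he : 1 - u' = u + (a:ℤ)*b*k := by
      have hm : m = 2*u - 1 := by omega
      have hm' : m' = 2*u' - 1 := by omega
      rw [hm, hm'] at hk
      ring_nf at hk ⊢
      linarith [hk]
    have e : Int.gcd ((a:ℤ)*b) (1 - u') = Int.gcd ((a:ℤ)*b) u := by
      rw [he]; exact gcd_shift _ _ _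
    have hab'' : a = b' := by
      rw [← key, ← e, hprodZ, mul_comm ((a':ℤ)) _, keyb']
    have hba : b = a' := by
      have : a * b = b' * a' := by rw [hprod]; ring
      rw [hab''] at this
      exact Nat.eq_of_mul_eq_mul_left hb' this
    omega
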